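/- Let η : [0,1] → A be continuous. Then the evaluation map g ↦ g(0) is a bijection from the set of C¹ maps g : [0,1] → A satisfying g'(θ) + η(θ)·g(θ) − g(θ)·η(θ) = 0 for all θ and the periodicity condition g(1) = g(0), onto the commutant {g₀ ∈ A : g₀·Hol_η = Hol_η·g₀} of the holonomy. In particular, a solution g of the equation satisfies g(1) = Hol_η · g(0) · Hol_η⁻¹, and it closes up to a loop (g(1) = g(0)) exactly when g(0) commutes with Hol_η. -/

import Mathlib

open Set

/-- A C¹ map `g : [0,1] → A` with derivative `Dg` solving the isotropy equation
`g' + ηg - gη = 0` on `[0,1]`. -/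
def IsIsotropySol {A : Type*} [NormedRing A] [NormedAlgebra ℝ A]
    (η g Dg : ℝ → A) : Prop :=
  (∀ θ ∈ Icc (0:ℝ) 1, HasDerivWithinAt g (Dg θ) (Icc (0:ℝ) 1) θ) ∧
  (∀ θ ∈ Icc (0:ℝ) 1, Dg θ + η θ * g θ - g θ * η θ = 0)

/-- Uniqueness for the linear ODE `x' = -η x` on `[0,1]`. -/
lemma ode_uniq_aux {A : Type*} [NormedRing A] [NormedAlgebra ℝ A]
    (η : ℝ → A) (hη : ContinuousOn η (Icc 0 1)) {f g : ℝ → A}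
    (hf : ∀ θ ∈ Icc (0:ℝ) 1, HasDerivWithinAt f (-(η θ * f θ)) (Icc (0:ℝ) 1) θ)
    (hg : ∀ θ ∈ Icc (0:ℝ) 1, HasDerivWithinAt g (-(η θ * g θ)) (Icc (0:ℝ) 1) θ)
    (h0 : f 0 = g 0) : EqOn f g (Icc (0:ℝ) 1) := by
  obtain ⟨C, hC⟩ := isCompact_Icc.exists_bound_of_continuousOn hη
  set K : NNReal := Real.toNNReal C with hK
  set v : ℝ → A → A := fun t x => -(η t * x) with hv
  set s : ℝ → Set A := fun t => if t ∈ Icc (0:ℝ) 1 then (univ : Set A) else ∅ with hs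
  have hlip : ∀ t, LipschitzOnWith K (v t) (s t) := by
    intro t
    by_cases ht : t ∈ Icc (0:ℝ) 1
    · simp only [hs, if_pos ht]
      rw [lipschitzOnWith_univ]
      refine LipschitzWith.of_dist_le_mul fun x y => ?_
      rw [dist_eq_norm, dist_eq_norm]
      have h1 : v t x - v t y = -(η t * (x - y)) := by
        simp only [hv]; noncomm_ring
      rw [h1, norm_neg]
      calc ‖η t * (x - y)‖ ≤ ‖η t‖ * ‖x - y‖ := norm_mul_le _ _
        _ ≤ (K : ℝ) * ‖x - y‖ := by
            refine mul_le_mul_of_nonneg_right ?_ (norm_nonneg _)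
            exact (hC t ht).trans (by rw [hK, Real.coe_toNNReal']; exact le_max_left _ _)
    · simp only [hs, if_neg ht]
      exact lipschitzOnWith_empty K (v t)
  have hderiv : ∀ (u : ℝ → A), (∀ θ ∈ Icc (0:ℝ) 1, HasDerivWithinAt u (-(η θ * u θ)) (Icc (0:ℝ) 1) θ) →
      ∀ t ∈ Ico (0:ℝ) 1, HasDerivWithinAt u (v t (u t)) (Ici t) t := by
    intro u hu t ht
    have h1 : HasDerivWithinAt u (-(η t * u t)) (Icc (0:ℝ) 1) t := hu t (Ico_subset_Icc_self ht)
    refine (h1.mono (Icc_subset_Icc ht.1 le_rfl)).mono_of_mem_nhdsWithin ?_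
    rw [← Ici_inter_Iic]
    exact Filter.inter_mem self_mem_nhdsWithin
      (mem_nhdsWithin_of_mem_nhds (Iic_mem_nhds ht.2))
  have hmem : ∀ (u : ℝ → A), ∀ t ∈ Ico (0:ℝ) 1, u t ∈ s t := by
    intro u t ht
    simp only [hs]
    rw [if_pos (Ico_subset_Icc_self ht)]
    trivial
  exact ODE_solution_unique_of_mem_Icc_right (fun t _ => hlip t)
    (fun θ hθ => (hf θ hθ).continuousWithinAt)
    (hderiv f hf) (hmem f)
    (fun θ hθ => (hg θ hθ).continuousWithinAt)
    (hderiv g hg) (hmem g) h0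

/-- Evaluation at `0` is a bijection between the periodic solutions of `g' + ηg - gη = 0`
and the commutant of the holonomy `Hol_η = Ψ_η(1)`: every solution satisfies
`g(1) = Hol_η · g(0) · Hol_η⁻¹`, it is periodic iff `g(0)` commutes with `Hol_η`,
every element of the commutant arises as the initial value of a periodic solution, and a
solution is determined on `[0,1]` by its initial value. -/
theorem stmt_6 {A : Type*} [NormedRing A] [NormedAlgebra ℝ A] [NormOneClass A]
    [CompleteSpace A] (η Ψ : ℝ → A) (hη : ContinuousOn η (Icc 0 1))
    -- Ψ is the horizontal path of η; it is pointwise invertible, and Hol_η = Ψ 1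
    (hΨ : ∀ θ ∈ Icc (0:ℝ) 1, HasDerivWithinAt Ψ (-(η θ * Ψ θ)) (Icc (0:ℝ) 1) θ)
    (hΨ0 : Ψ 0 = 1) (hΨinv : ∀ θ ∈ Icc (0:ℝ) 1, IsUnit (Ψ θ)) :
    -- every solution satisfies g(1) = Hol_η · g(0) · Hol_η⁻¹
    (∀ g Dg : ℝ → A, IsIsotropySol η g Dg →
      g 1 = Ψ 1 * g 0 * Ring.inverse (Ψ 1)) ∧
    -- a solution closes up to a loop exactly when g(0) commutes with the holonomy
    (∀ g Dg : ℝ → A, IsIsotropySol η g Dg →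
      (g 1 = g 0 ↔ g 0 * Ψ 1 = Ψ 1 * g 0)) ∧
    -- surjectivity onto the commutant of the holonomy
    (∀ g₀ : A, g₀ * Ψ 1 = Ψ 1 * g₀ →
      ∃ g Dg : ℝ → A, IsIsotropySol η g Dg ∧ g 0 = g₀ ∧ g 1 = g 0) ∧
    -- injectivity: a solution is determined by its value at 0
    (∀ g₁ Dg₁ g₂ Dg₂ : ℝ → A, IsIsotropySol η g₁ Dg₁ → IsIsotropySol η g₂ Dg₂ →
      g₁ 0 = g₂ 0 → EqOn g₁ g₂ (Icc (0:ℝ) 1)) := by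
  have h1mem : (1:ℝ) ∈ Icc (0:ℝ) 1 := by norm_num
  -- the key conjugation identity
  have key : ∀ g Dg : ℝ → A, IsIsotropySol η g Dg →
      ∀ θ ∈ Icc (0:ℝ) 1, g θ * Ψ θ = Ψ θ * g 0 := by
    intro g Dg hsol θ hθ
    have hf : ∀ θ ∈ Icc (0:ℝ) 1,
        HasDerivWithinAt (fun θ => g θ * Ψ θ) (-(η θ * (g θ * Ψ θ))) (Icc (0:ℝ) 1) θ := by
      intro θ hθ
      have h1 := (hsol.1 θ hθ).mul (hΨ θ hθ)
      have e : Dg θ * Ψ θ + g θ * -(η θ * Ψ θ) = -(η θ * (g θ * Ψ θ)) := by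
        have h2 := hsol.2 θ hθ
        have h3 : Dg θ = g θ * η θ - η θ * g θ := by
          rw [eq_sub_iff_add_eq, ← sub_eq_zero]; exact h2
        rw [h3]; noncomm_ring
      exact e ▸ h1
    have hg : ∀ θ ∈ Icc (0:ℝ) 1,
        HasDerivWithinAt (fun θ => Ψ θ * g 0) (-(η θ * (Ψ θ * g 0))) (Icc (0:ℝ) 1) θ := by
      intro θ hθ
      have h1 := (hΨ θ hθ).mul_const (g 0)
      have e : -(η θ * Ψ θ) * g 0 = -(η θ * (Ψ θ * g 0)) := by noncomm_ring
      exact e ▸ h1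
    have h0 : g 0 * Ψ 0 = Ψ 0 * g 0 := by rw [hΨ0, mul_one, one_mul]
    exact ode_uniq_aux η hη hf hg h0 hθ
  refine ⟨?_, ?_, ?_, ?_⟩
  · -- part 1
    intro g Dg hsol
    have k := key g Dg hsol 1 h1mem
    rw [← k, Ring.mul_inverse_cancel_right _ _ (hΨinv 1 h1mem)]
  · -- part 2
    intro g Dg hsol
    have k := key g Dg hsol 1 h1mem
    constructor
    · intro h; rw [h] at k; exact k
    · intro h
      have : g 1 * Ψ 1 = g 0 * Ψ 1 := by rw [k, ← h]
      exact (hΨinv 1 h1mem).mul_left_injective this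
  · -- part 3 : surjectivity
    intro g₀ hcomm
    set Φ : ℝ → A := fun θ => Ring.inverse (Ψ θ) with hΦdef
    have hΦ : ∀ θ ∈ Icc (0:ℝ) 1,
        HasDerivWithinAt Φ (Φ θ * η θ) (Icc (0:ℝ) 1) θ := by
      intro θ hθ
      obtain ⟨u, hu⟩ := hΨinv θ hθ
      have hinv : HasFDerivAt Ring.inverse
          (-(ContinuousLinearMap.mulLeftRight ℝ A ↑u⁻¹ ↑u⁻¹)) (Ψ θ) :=
        hu ▸ hasFDerivAt_ringInverse (𝕜 := ℝ) u
      have h1 := hinv.comp_hasDerivWithinAt θ (hΨ θ hθ)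
      have e : (-(ContinuousLinearMap.mulLeftRight ℝ A ↑u⁻¹ ↑u⁻¹)) (-(η θ * Ψ θ))
          = Φ θ * η θ := by
        simp only [ContinuousLinearMap.neg_apply, ContinuousLinearMap.mulLeftRight_apply,
          hΦdef, ← hu, Ring.inverse_unit]
        simp [mul_neg, neg_neg, mul_assoc, Units.mul_inv]
      exact e ▸ h1
    refine ⟨fun θ => Ψ θ * g₀ * Φ θ,
      fun θ => (-(η θ * Ψ θ) * g₀) * Φ θ + (Ψ θ * g₀) * (Φ θ * η θ), ⟨?_, ?_⟩, ?_, ?_⟩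
    · intro θ hθ
      have h1 := ((hΨ θ hθ).mul_const g₀).mul (hΦ θ hθ)
      exact h1
    · intro θ hθ
      noncomm_ring
    · simp [hΦdef, hΨ0]
    · have hu1 := hΨinv 1 h1mem
      simp only [hΦdef, hΨ0, Ring.inverse_one, mul_one, one_mul]
      rw [← hcomm, Ring.mul_inverse_cancel_right _ _ hu1]
  · -- part 4 : injectivity
    intro g₁ Dg₁ g₂ Dg₂ hs₁ hs₂ h0 θ hθ
    have k₁ := key g₁ Dg₁ hs₁ θ hθ
    have k₂ := key g₂ Dg₂ hs₂ θ hθ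
    have : g₁ θ * Ψ θ = g₂ θ * Ψ θ := by rw [k₁, k₂, h0]
    exact (hΨinv θ hθ).mul_left_injective this
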